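/- arXiv:1604.08052 — 2 statements merged into one kernel-verified Lean document; each statement's English description precedes it below -/
import Mathlib

section
/- Define G(z) = √2/√(1 - z² + √(1-z²)) and F_1(z) = (1 + √(1-z²) - √2·√(1 - z² + √(1-z²)))/z for 0 < z < 1. Then as z → 1⁻, G(z)·(1 + F_1(z))/(1 - F_1(z)) is asymptotically equivalent to √2/√(1-z), i.e., the ratio of the two expressions tends to 1. -/
/-- `G(z) = √2/√(1 - z² + √(1-z²))` from the Green function of the comb walk. -/
noncomputable def Gfun (z : ℝ) : ℝ :=
  Real.sqrt 2 / Real.sqrt (1 - z ^ 2 + Real.sqrt (1 - z ^ 2))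

/-- `F₁(z) = (1 + √(1-z²) - √2·√(1 - z² + √(1-z²)))/z`. -/
noncomputable def F1 (z : ℝ) : ℝ :=
  (1 + Real.sqrt (1 - z ^ 2) - Real.sqrt 2 * Real.sqrt (1 - z ^ 2 + Real.sqrt (1 - z ^ 2))) / z

open Filter Set Real

lemma key_eq (z : ℝ) (hz : z ∈ Set.Ioo (0:ℝ) 1) :
    (Gfun z * (1 + F1 z) / (1 - F1 z)) / (Real.sqrt 2 / Real.sqrt (1 - z)) =
    ((z + 1 + Real.sqrt (1 - z ^ 2) -
        Real.sqrt 2 * Real.sqrt (1 - z ^ 2 + Real.sqrt (1 - z ^ 2))) / (2 * z)) *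
      (Real.sqrt 2 + (1 - z + Real.sqrt (1 - z ^ 2)) /
          Real.sqrt (1 - z ^ 2 + Real.sqrt (1 - z ^ 2))) *
      (1 / (Real.sqrt (1 - z) + Real.sqrt (1 + z))) := by
  obtain ⟨hz0, hz1⟩ := hz
  simp only [Gfun, F1]
  have hz2 : (0:ℝ) < 1 - z ^ 2 := by nlinarith
  set s := Real.sqrt (1 - z ^ 2) with hsdef
  have hs0 : 0 < s := Real.sqrt_pos.2 hz2
  have hs2 : s ^ 2 = 1 - z ^ 2 := Real.sq_sqrt hz2.le
  set t := Real.sqrt (1 - z ^ 2 + s) with htdef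
  have ht0 : 0 < t := Real.sqrt_pos.2 (by linarith)
  have ht2 : t ^ 2 = 1 - z ^ 2 + s := Real.sq_sqrt (by linarith)
  set w := Real.sqrt 2 with hwdef
  have hw0 : 0 < w := Real.sqrt_pos.2 (by norm_num)
  have hw2 : w ^ 2 = 2 := Real.sq_sqrt (by norm_num)
  set u := Real.sqrt (1 - z) with hudef
  have hu0 : 0 < u := Real.sqrt_pos.2 (by linarith)
  have hu2 : u ^ 2 = 1 - z := Real.sq_sqrt (by linarith)
  set v := Real.sqrt (1 + z) with hvdef
  have hv0 : 0 < v := Real.sqrt_pos.2 (by linarith)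
  have huv : u * v = s := by
    rw [hudef, hvdef, hsdef, ← Real.sqrt_mul (by linarith : (0:ℝ) ≤ 1 - z)]
    congr 1; ring
  have ha : (0:ℝ) < 1 - z + s := by linarith
  have hprod : (w * t + (1 - z + s)) * (w * t - (1 - z + s)) = 2 * z * (1 - z + s) := by
    linear_combination t ^ 2 * hw2 + 2 * ht2 - hs2
  have hD : 0 < w * t - (1 - z + s) := by
    nlinarith [mul_pos hw0 ht0, hprod, ha]
  have hne : 1 - (1 + s - w * t) / z = (w * t - (1 - z + s)) / z := by
    field_simp; ring
  have e1 : (w / t * (1 + (1 + s - w * t) / z) / (1 - (1 + s - w * t) / z)) / (w / u) =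
      ((z + 1 + s - w * t) * u) / (t * (w * t - (1 - z + s))) := by
    rw [hne]
    field_simp
    ring
  have e2 : ((z + 1 + s - w * t) / (2 * z)) * (w + (1 - z + s) / t) * (1 / (u + v)) =
      ((z + 1 + s - w * t) * (w * t + (1 - z + s))) / (2 * z * t * (u + v)) := by
    field_simp
  rw [e1, e2, div_eq_div_iff (by positivity) (by positivity)]
  linear_combination (-((z + 1 + s - w * t) * t)) * hprod +
    (2 * z * (z + 1 + s - w * t) * t) * hu2 + (2 * z * (z + 1 + s - w * t) * t) * huv

/-- As `z → 1⁻`, `G(z)(1+F₁(z))/(1-F₁(z)) ~ √2/√(1-z)`: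
the ratio of the two expressions tends to `1`. -/
theorem stmt_5 :
    Filter.Tendsto
      (fun z : ℝ => (Gfun z * (1 + F1 z) / (1 - F1 z)) / (Real.sqrt 2 / Real.sqrt (1 - z)))
      (nhdsWithin 1 (Set.Iio 1)) (nhds 1) := by
  have hmem : Set.Ioo (0:ℝ) 1 ∈ nhdsWithin (1:ℝ) (Set.Iio 1) :=
    Ioo_mem_nhdsLT_of_mem (by constructor <;> norm_num)
  have l1 : Tendsto (fun z : ℝ => (z + 1 + Real.sqrt (1 - z ^ 2) -
      Real.sqrt 2 * Real.sqrt (1 - z ^ 2 + Real.sqrt (1 - z ^ 2))) / (2 * z))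
      (nhdsWithin 1 (Set.Iio 1)) (nhds 1) := by
    have hc : ContinuousAt (fun z : ℝ => (z + 1 + Real.sqrt (1 - z ^ 2) -
        Real.sqrt 2 * Real.sqrt (1 - z ^ 2 + Real.sqrt (1 - z ^ 2))) / (2 * z)) 1 := by
      apply ContinuousAt.div
      · fun_prop
      · fun_prop
      · norm_num
    have := hc.tendsto.mono_left (nhdsWithin_le_nhds (s := Set.Iio (1:ℝ)))
    convert this using 2
    norm_num
  have l2 : Tendsto (fun z : ℝ => Real.sqrt 2 + (1 - z + Real.sqrt (1 - z ^ 2)) /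
      Real.sqrt (1 - z ^ 2 + Real.sqrt (1 - z ^ 2)))
      (nhdsWithin 1 (Set.Iio 1)) (nhds (Real.sqrt 2 + 0)) := by
    apply Tendsto.const_add
    have hT : Tendsto (fun z : ℝ => Real.sqrt (1 - z ^ 2 + Real.sqrt (1 - z ^ 2)))
        (nhdsWithin 1 (Set.Iio 1)) (nhds 0) := by
      have hc : ContinuousAt (fun z : ℝ => Real.sqrt (1 - z ^ 2 + Real.sqrt (1 - z ^ 2))) 1 := by
        fun_prop
      have := hc.tendsto.mono_left (nhdsWithin_le_nhds (s := Set.Iio (1:ℝ)))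
      convert this using 2
      norm_num
    apply squeeze_zero'
    · filter_upwards [hmem] with z hz
      have h1 : (0:ℝ) ≤ 1 - z + Real.sqrt (1 - z ^ 2) := by
        nlinarith [Real.sqrt_nonneg (1 - z ^ 2), hz.1, hz.2]
      exact div_nonneg h1 (Real.sqrt_nonneg _)
    · filter_upwards [hmem] with z hz
      obtain ⟨hz0, hz1⟩ := hz
      have hz2 : (0:ℝ) < 1 - z ^ 2 := by nlinarith
      have hs0 : 0 < Real.sqrt (1 - z ^ 2) := Real.sqrt_pos.2 hz2
      have ht0 : 0 < Real.sqrt (1 - z ^ 2 + Real.sqrt (1 - z ^ 2)) :=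
        Real.sqrt_pos.2 (by linarith)
      have ht2 : Real.sqrt (1 - z ^ 2 + Real.sqrt (1 - z ^ 2)) ^ 2 =
          1 - z ^ 2 + Real.sqrt (1 - z ^ 2) := Real.sq_sqrt (by linarith)
      rw [div_le_iff₀ ht0, ← sq]
      rw [ht2]
      nlinarith
    · exact hT
  have l3 : Tendsto (fun z : ℝ => 1 / (Real.sqrt (1 - z) + Real.sqrt (1 + z)))
      (nhdsWithin 1 (Set.Iio 1)) (nhds (1 / Real.sqrt 2)) := by
    have hc : ContinuousAt (fun z : ℝ => 1 / (Real.sqrt (1 - z) + Real.sqrt (1 + z))) 1 := by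
      apply ContinuousAt.div
      · fun_prop
      · fun_prop
      · show Real.sqrt (1 - 1) + Real.sqrt (1 + 1) ≠ 0
        positivity
    have := hc.tendsto.mono_left (nhdsWithin_le_nhds (s := Set.Iio (1:ℝ)))
    convert this using 2
    norm_num
  have hall := (l1.mul l2).mul l3
  have hval : (1 * (Real.sqrt 2 + 0)) * (1 / Real.sqrt 2) = 1 := by
    have h2 : (0:ℝ) < Real.sqrt 2 := Real.sqrt_pos.2 (by norm_num)
    field_simp
    simp
  rw [hval] at hall
  apply hall.congr'
  filter_upwards [hmem] with z hz
  exact (key_eq z hz).symm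
end

section
/- Let (E_n) and (B_n) be sequences of events on a probability space. Set E_n* = ∪_{j≥n} E_j and, for m ≤ n, B*_{n,m} = B_n ∩ B_{n-1}^c ∩ ... ∩ B_m^c (with B*_{n,n} = B_n). Suppose P(E_n infinitely often) = 0 and there exists C > 0 such that P(E_n* | B*_{n,m}) ≥ C for all large enough m ≤ n (whenever P(B*_{n,m}) > 0). Then P(B_n infinitely often) = 0. -/
open MeasureTheory Filter

/-- Lemma 4.3: if `P(Eₙ i.o.) = 0` and `P(Eₙ* | B*_{n,m}) ≥ C > 0` for all large
`m ≤ n` (whenever `B*_{n,m}` has positive probability), then `P(Bₙ i.o.) = 0`.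
Here `Eₙ* = ⋃_{j≥n} Eⱼ` and `B*_{n,m} = Bₙ ∩ Bₙ₋₁ᶜ ∩ ... ∩ Bₘᶜ`, and the
conditional bound is written in the equivalent form `P(Eₙ* ∩ B*_{n,m}) ≥ C·P(B*_{n,m})`. -/
theorem stmt_8 {Ω : Type*} [MeasurableSpace Ω] (P : Measure Ω) [IsProbabilityMeasure P]
    (E B : ℕ → Set Ω) (hE : ∀ n, MeasurableSet (E n)) (hB : ∀ n, MeasurableSet (B n))
    (hEio : P (limsup E atTop) = 0)
    (C : ENNReal) (hC : 0 < C)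
    (hcond : ∃ M : ℕ, ∀ m, M ≤ m → ∀ n, m ≤ n →
      P (B n ∩ ⋂ k ∈ Set.Ico m n, (B k)ᶜ) ≠ 0 →
        C * P (B n ∩ ⋂ k ∈ Set.Ico m n, (B k)ᶜ) ≤
          P ((⋃ j, ⋃ (_ : n ≤ j), E j) ∩ (B n ∩ ⋂ k ∈ Set.Ico m n, (B k)ᶜ))) :
    P (limsup B atTop) = 0 := by
  classical
  obtain ⟨M, hM⟩ := hcond
  set Estar : ℕ → Set Ω := fun n => ⋃ j, ⋃ (_ : n ≤ j), E j with hEstar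
  have hEstarMeas : ∀ n, MeasurableSet (Estar n) := fun n =>
    MeasurableSet.iUnion fun j => MeasurableSet.iUnion fun _ => hE j
  have hEstarAnti : Antitone Estar := by
    intro a b hab
    refine Set.iUnion₂_subset fun j hj => ?_
    exact Set.subset_iUnion₂ (s := fun j _ => E j) j (hab.trans hj)
  -- main bound
  have key : ∀ m, M ≤ m → C * P (limsup B atTop) ≤ P (Estar m) := by
    intro m hm
    set D : ℕ → Set Ω := fun i => B (m + i) ∩ ⋂ k ∈ Set.Ico m (m + i), (B k)ᶜ with hD
    have hDmeas : ∀ i, MeasurableSet (D i) := fun i =>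
      (hB _).inter (MeasurableSet.biInter (Set.to_countable _) fun k _ => (hB k).compl)
    have hdisj : Pairwise (Function.onFun Disjoint D) := by
      intro i j hij
      rcases lt_or_gt_of_ne hij with h | h
      · refine Set.disjoint_left.mpr fun x hxi hxj => ?_
        have hx2 := hxj.2
        simp only [Set.mem_iInter] at hx2
        exact hx2 (m + i) (Set.mem_Ico.mpr ⟨by omega, by omega⟩) hxi.1
      · refine Set.disjoint_right.mpr fun x hxj hxi => ?_
        have hx2 := hxi.2
        simp only [Set.mem_iInter] at hx2
        exact hx2 (m + j) (Set.mem_Ico.mpr ⟨by omega, by omega⟩) hxj.1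
    have hunion : (⋃ i, D i) = ⋃ n, ⋃ (_ : m ≤ n), B n := by
      ext x
      simp only [Set.mem_iUnion]
      constructor
      · rintro ⟨i, hx⟩
        exact ⟨m + i, Nat.le_add_right m i, hx.1⟩
      · rintro ⟨n, hn, hx⟩
        have hex : ∃ k, x ∈ B (m + k) := ⟨n - m, by rwa [Nat.add_sub_cancel' hn]⟩
        refine ⟨Nat.find hex, Nat.find_spec hex, ?_⟩
        simp only [Set.mem_iInter]
        intro k hk
        rw [Set.mem_Ico] at hk
        have : k = m + (k - m) := by omega
        rw [this]
        intro hxk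
        exact Nat.find_min hex (m := k - m) (by omega) hxk
    have hsub : limsup B atTop ⊆ ⋃ n, ⋃ (_ : m ≤ n), B n := by
      have h1 : limsup B atTop = ⋂ n, ⋃ i, ⋃ (_ : n ≤ i), B i :=
        limsup_eq_iInf_iSup_of_nat
      rw [h1]
      exact Set.iInter_subset _ m
    calc C * P (limsup B atTop) ≤ C * P (⋃ n, ⋃ (_ : m ≤ n), B n) :=
          mul_le_mul_right (measure_mono hsub) C
      _ = C * ∑' i, P (D i) := by rw [← hunion, measure_iUnion hdisj hDmeas]
      _ = ∑' i, C * P (D i) := ENNReal.tsum_mul_left.symm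
      _ ≤ ∑' i, P (Estar m ∩ D i) := by
          refine ENNReal.tsum_le_tsum fun i => ?_
          by_cases h0 : P (D i) = 0
          · simp [h0]
          · have := hM m hm (m + i) (Nat.le_add_right m i) h0
            refine this.trans (measure_mono (Set.inter_subset_inter_left _ ?_))
            exact hEstarAnti (Nat.le_add_right m i)
      _ = P (⋃ i, Estar m ∩ D i) := by
          refine (measure_iUnion ?_ fun i => (hEstarMeas m).inter (hDmeas i)).symm
          exact fun i j hij =>
            (hdisj hij).mono Set.inter_subset_right Set.inter_subset_right
      _ ≤ P (Estar m) :=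
          measure_mono (Set.iUnion_subset fun i => Set.inter_subset_left)
  -- limit argument
  have hIio : P (⋂ n, Estar n) = 0 := by
    have h1 : limsup E atTop = ⋂ n, Estar n := limsup_eq_iInf_iSup_of_nat
    rwa [← h1]
  have htend : Tendsto (fun n => P (Estar n)) atTop (nhds (P (⋂ n, Estar n))) :=
    tendsto_measure_iInter_atTop (fun n => (hEstarMeas n).nullMeasurableSet) hEstarAnti
      ⟨0, measure_ne_top P _⟩
  rw [hIio] at htend
  have hle : C * P (limsup B atTop) ≤ 0 :=
    ge_of_tendsto htend (eventually_atTop.mpr ⟨M, fun m hm => key m hm⟩)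
  have := le_antisymm hle zero_le
  rcases mul_eq_zero.mp this with h | h
  · exact absurd h hC.ne'
  · exact h
end
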